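/- (Minimal Stinespring construction, uniqueness) Let φ : G → L(H) be α-completely positive with minimal Stinespring construction (π_φ, (H_φ, J_φ), V_φ). If π is a J-unitary representation of G on a Krein space (K, J) and V : H → K is bounded with φ(g) = V*π(g)V for all g, [π(G)VH] = K, and Jπ(g)V = π(α(g))V for all g, then there is a unitary U : H_φ → K with U J_φ = J U, U V_φ = V, and U π_φ(g) = π(g) U for all g ∈ G. -/

import Mathlib

open scoped ComplexOrder

noncomputable section

def IsInvolution (G : Type*) [Group G] (α : G → G) : Prop :=
  (∀ g, α (α g) = g) ∧ α 1 = 1 ∧ ∀ g : G, α g⁻¹ = (α g)⁻¹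

def IsAlphaCP {G : Type*} [Group G] (α : G → G)
    {H : Type*} [NormedAddCommGroup H] [InnerProductSpace ℂ H] [CompleteSpace H]
    (φ : G → H →L[ℂ] H) : Prop :=
  (∀ g₁ g₂ : G, φ (α g₁ * α g₂) = φ (α (g₁ * g₂)) ∧ φ (α (g₁ * g₂)) = φ (g₁ * g₂)) ∧
  (∀ (n : ℕ) (g : Fin n → G) (ξ : Fin n → H),
    0 ≤ ∑ i, ∑ j, (inner ℂ (φ ((α (g i))⁻¹ * g j) (ξ j)) (ξ i) : ℂ)) ∧
  (∃ K > (0 : ℝ), ∀ (n : ℕ) (g : Fin n → G) (ξ : Fin n → H),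
    ∑ i, ∑ j, (inner ℂ (((ContinuousLinearMap.adjoint (φ (g i))) ∘L φ (g j)) (ξ j)) (ξ i) : ℂ) ≤
      (K : ℂ) * ∑ i, ∑ j, (inner ℂ (φ ((α (g i))⁻¹ * g j) (ξ j)) (ξ i) : ℂ)) ∧
  (∀ g : G, ∃ M > (0 : ℝ), ∀ (n : ℕ) (gs : Fin n → G) (ξ : Fin n → H),
    ∑ i, ∑ j, (inner ℂ (φ ((α (g * gs i))⁻¹ * (g * gs j)) (ξ j)) (ξ i) : ℂ) ≤
      (M : ℂ) * ∑ i, ∑ j, (inner ℂ (φ ((α (gs i))⁻¹ * gs j) (ξ j)) (ξ i) : ℂ))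

structure KreinDilation (G : Type*) [Group G] (α : G → G)
    (H : Type*) [NormedAddCommGroup H] [InnerProductSpace ℂ H] [CompleteSpace H]
    (φ : G → H →L[ℂ] H) where
  K : Type
  [nK : NormedAddCommGroup K]
  [iK : InnerProductSpace ℂ K]
  [cK : CompleteSpace K]
  J : K →L[ℂ] K
  rep : G → K →L[ℂ] K
  V : H →L[ℂ] K
  J_sa : ContinuousLinearMap.adjoint J = J
  J_inv : J ∘L J = 1
  rep_one : rep 1 = 1
  rep_mul : ∀ g g', rep (g * g') = rep g ∘L rep g'
  rep_inv : ∀ g, rep g⁻¹ = J ∘L (ContinuousLinearMap.adjoint (rep g)) ∘L J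
  eq : ∀ g, φ g = (ContinuousLinearMap.adjoint V) ∘L rep g ∘L V
  minimal : (Submodule.span ℂ {x : K | ∃ g ξ, x = rep g (V ξ)}).topologicalClosure = ⊤
  commJ : ∀ g, J ∘L rep g ∘L V = rep (α g) ∘L V

attribute [instance] KreinDilation.nK KreinDilation.iK KreinDilation.cK

section Aux

variable {G : Type*} [Group G] {α : G → G}
    {H : Type*} [NormedAddCommGroup H] [InnerProductSpace ℂ H] [CompleteSpace H]
    {φ : G → H →L[ℂ] H}

lemma KD_JJ (D : KreinDilation G α H φ) (x : D.K) : D.J (D.J x) = x := by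
  have h := congrArg (fun A : D.K →L[ℂ] D.K => A x) D.J_inv
  simpa using h

lemma KD_commJ_apply (D : KreinDilation G α H φ) (g : G) (ξ : H) :
    D.J (D.rep g (D.V ξ)) = D.rep (α g) (D.V ξ) := by
  have h := congrArg (fun A : H →L[ℂ] D.K => A ξ) (D.commJ g)
  simpa using h

lemma KD_rep_mul_apply (D : KreinDilation G α H φ) (g g' : G) (x : D.K) :
    D.rep g (D.rep g' x) = D.rep (g * g') x := by
  have h := congrArg (fun A : D.K →L[ℂ] D.K => A x) (D.rep_mul g g')
  simpa using h.symm

lemma KD_rep_one_apply (D : KreinDilation G α H φ) (x : D.K) : D.rep 1 x = x := by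
  have h := congrArg (fun A : D.K →L[ℂ] D.K => A x) D.rep_one
  simpa using h

lemma KD_adjoint (D : KreinDilation G α H φ) (g : G) :
    ContinuousLinearMap.adjoint (D.rep g) = D.J ∘L D.rep g⁻¹ ∘L D.J := by
  ext x
  rw [D.rep_inv g]
  simp only [ContinuousLinearMap.comp_apply]
  rw [KD_JJ, KD_JJ]

/-- The key inner product computation, depending only on `φ`. -/
lemma KD_inner (D : KreinDilation G α H φ) (g h : G) (ξ η : H) :
    (inner ℂ (D.rep g (D.V ξ)) (D.rep h (D.V η)) : ℂ)
      = inner ℂ ξ (φ (α (g⁻¹ * α h)) η) := by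
  have h1 : (inner ℂ (D.rep g (D.V ξ)) (D.rep h (D.V η)) : ℂ)
      = inner ℂ (D.V ξ) (ContinuousLinearMap.adjoint (D.rep g) (D.rep h (D.V η))) :=
    (ContinuousLinearMap.adjoint_inner_right (D.rep g) _ _).symm
  rw [h1, KD_adjoint]
  simp only [ContinuousLinearMap.comp_apply]
  rw [KD_commJ_apply, KD_rep_mul_apply, KD_commJ_apply]
  have h2 : (inner ℂ (D.V ξ) (D.rep (α (g⁻¹ * α h)) (D.V η)) : ℂ)
      = inner ℂ ξ (ContinuousLinearMap.adjoint D.V (D.rep (α (g⁻¹ * α h)) (D.V η))) :=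
    (ContinuousLinearMap.adjoint_inner_right D.V _ _).symm
  rw [h2]
  have h3 := congrArg (fun A : H →L[ℂ] H => A η) (D.eq (α (g⁻¹ * α h)))
  simp only [ContinuousLinearMap.comp_apply] at h3
  rw [← h3]

lemma KD_dense (D : KreinDilation G α H φ) :
    Dense ((Submodule.span ℂ {x : D.K | ∃ g ξ, x = D.rep g (D.V ξ)} : Submodule ℂ D.K) :
      Set D.K) := by
  rw [dense_iff_closure_eq, ← Submodule.topologicalClosure_coe, D.minimal]
  rfl

lemma KD_uniq (D' : KreinDilation G α H φ) (y y' : D'.K)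
    (hyy : ∀ (g : G) (ξ : H), (inner ℂ (D'.rep g (D'.V ξ)) y : ℂ) = inner ℂ (D'.rep g (D'.V ξ)) y') :
    y = y' := by
  have hz : y - y' ∈ (Submodule.span ℂ {x : D'.K | ∃ g ξ, x = D'.rep g (D'.V ξ)})ᗮ := by
    rw [Submodule.mem_orthogonal]
    intro u hu
    induction hu using Submodule.span_induction with
    | mem x hx =>
      obtain ⟨g, ξ, rfl⟩ := hx
      rw [inner_sub_right, hyy, sub_self]
    | zero => simp
    | add x y hx hy ihx ihy => rw [inner_add_left, ihx, ihy, add_zero]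
    | smul a x hx ihx => rw [inner_smul_left, ihx, mul_zero]
  have horth : (Submodule.span ℂ {x : D'.K | ∃ g ξ, x = D'.rep g (D'.V ξ)})ᗮ = ⊥ :=
    Submodule.topologicalClosure_eq_top_iff.mp D'.minimal
  rw [horth, Submodule.mem_bot, sub_eq_zero] at hz
  exact hz

lemma KD_exists_clm (D D' : KreinDilation G α H φ) :
    ∃ T : D.K →L[ℂ] D'.K,
      (∀ (g : G) (ξ : H), T (D.rep g (D.V ξ)) = D'.rep g (D'.V ξ)) ∧ (∀ x, ‖T x‖ = ‖x‖) := by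
  classical
  set SD : Submodule ℂ D.K := Submodule.span ℂ {x : D.K | ∃ g ξ, x = D.rep g (D.V ξ)} with hSD
  have hex : ∀ x ∈ SD, ∃ y : D'.K, ∀ (g : G) (ξ : H),
      (inner ℂ (D'.rep g (D'.V ξ)) y : ℂ) = inner ℂ (D.rep g (D.V ξ)) x := by
    intro x hx
    induction hx using Submodule.span_induction with
    | mem x hx =>
      obtain ⟨g, ξ, rfl⟩ := hx
      exact ⟨D'.rep g (D'.V ξ), fun h η => by rw [KD_inner, KD_inner]⟩
    | zero => exact ⟨0, fun h η => by simp⟩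
    | add x y hx hy ihx ihy =>
      obtain ⟨yx, hyx⟩ := ihx
      obtain ⟨yy, hyy⟩ := ihy
      exact ⟨yx + yy, fun h η => by
        rw [inner_add_right, inner_add_right, hyx, hyy]⟩
    | smul a x hx ihx =>
      obtain ⟨y, hy⟩ := ihx
      exact ⟨a • y, fun h η => by rw [inner_smul_right, inner_smul_right, hy]⟩
  choose f0 hf0 using fun x : SD => hex x.1 x.2
  have huniq := KD_uniq D'
  have hgen : ∀ (g : G) (ξ : H) (hm : D.rep g (D.V ξ) ∈ SD),
      f0 ⟨D.rep g (D.V ξ), hm⟩ = D'.rep g (D'.V ξ) := by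
    intro g ξ hm
    refine huniq _ _ fun h η => ?_
    rw [hf0 ⟨_, hm⟩ h η, KD_inner, KD_inner]
  have hadd : ∀ x y : SD, f0 (x + y) = f0 x + f0 y := by
    intro x y
    refine huniq _ _ fun g ξ => ?_
    rw [hf0 (x + y) g ξ, show ((x + y : SD) : D.K) = (x : D.K) + (y : D.K) from rfl,
      inner_add_right, ← hf0 x g ξ, ← hf0 y g ξ, ← inner_add_right]
  have hsmul : ∀ (a : ℂ) (x : SD), f0 (a • x) = a • f0 x := by
    intro a x
    refine huniq _ _ fun g ξ => ?_
    rw [hf0 (a • x) g ξ, show ((a • x : SD) : D.K) = a • (x : D.K) from rfl,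
      inner_smul_right, ← hf0 x g ξ, ← inner_smul_right]
  -- inner product preservation
  have hinner : ∀ x y : SD, (inner ℂ (f0 x) (f0 y) : ℂ) = inner ℂ (x : D.K) (y : D.K) := by
    intro x y
    have main : ∀ b ∈ SD, ∀ z : D'.K,
        (∀ (g : G) (ξ : H), (inner ℂ (D'.rep g (D'.V ξ)) z : ℂ) = inner ℂ (D.rep g (D.V ξ)) b) →
        (inner ℂ (f0 x) z : ℂ) = inner ℂ (x : D.K) b := by
      intro b hb
      induction hb using Submodule.span_induction with
      | mem b hbs =>
        intro z hz
        obtain ⟨g, ξ, rfl⟩ := hbs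
        have hzeq : z = D'.rep g (D'.V ξ) := by
          refine huniq _ _ fun h η => ?_
          rw [hz h η, KD_inner, KD_inner]
        rw [hzeq, ← inner_conj_symm, hf0 x g ξ, inner_conj_symm]
      | zero =>
        intro z hz
        have hzeq : z = 0 := by
          refine huniq _ _ fun h η => ?_
          rw [hz h η]; simp
        rw [hzeq]; simp
      | add b c hbm hcm ihb ihc =>
        intro z hz
        obtain ⟨zb, hzb⟩ := hex b hbm
        obtain ⟨zc, hzc⟩ := hex c hcm
        have hzeq : z = zb + zc := by
          refine huniq _ _ fun h η => ?_
          rw [hz h η, inner_add_right, ← hzb h η, ← hzc h η, ← inner_add_right]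
        rw [hzeq, inner_add_right, ihb zb hzb, ihc zc hzc, inner_add_right]
      | smul a b hbm ihb =>
        intro z hz
        obtain ⟨zb, hzb⟩ := hex b hbm
        have hzeq : z = a • zb := by
          refine huniq _ _ fun h η => ?_
          rw [hz h η, inner_smul_right, ← hzb h η, ← inner_smul_right]
        rw [hzeq, inner_smul_right, ihb zb hzb, inner_smul_right]
    exact main y.1 y.2 (f0 y) (hf0 y)
  have hnorm : ∀ x : SD, ‖f0 x‖ = ‖(x : D.K)‖ := by
    intro x
    have h3 : ‖f0 x‖ ^ 2 = ‖(x : D.K)‖ ^ 2 := by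
      rw [← @inner_self_eq_norm_sq ℂ, ← @inner_self_eq_norm_sq ℂ, hinner x x]
    exact (sq_eq_sq₀ (norm_nonneg _) (norm_nonneg _)).mp h3
  let flin : SD →ₗ[ℂ] D'.K :=
    { toFun := f0, map_add' := hadd, map_smul' := hsmul }
  let f : SD →L[ℂ] D'.K := flin.mkContinuous 1 (fun x => by
    simpa [flin, hnorm x] using le_refl ‖(x : D.K)‖)
  have hfval : ∀ x : SD, f x = f0 x := fun x => rfl
  let e : SD →L[ℂ] D.K := SD.subtypeL
  have he_range : Set.range (e : SD → D.K) = (SD : Set D.K) := Subtype.range_coe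
  have he_dense : DenseRange (e : SD → D.K) := by
    rw [DenseRange, he_range]; exact KD_dense D
  have he_ind : IsUniformInducing (e : SD → D.K) :=
    isometry_subtype_coe.isUniformInducing
  refine ⟨f.extend e, ?_, ?_⟩
  · intro g ξ
    have hm : D.rep g (D.V ξ) ∈ SD := Submodule.subset_span ⟨g, ξ, rfl⟩
    have h := ContinuousLinearMap.extend_eq f he_dense he_ind ⟨D.rep g (D.V ξ), hm⟩
    rw [hfval, hgen g ξ hm] at h
    exact h
  · intro x
    refine he_dense.induction_on x ?_ ?_
    · exact isClosed_eq (continuous_norm.comp (f.extend e).continuous)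
        continuous_norm
    · intro a
      rw [ContinuousLinearMap.extend_eq f he_dense he_ind a, hfval, hnorm a]
      rfl

end Aux

theorem minimal_stinespring_unique {G : Type*} [Group G] (α : G → G)
    {H : Type*} [NormedAddCommGroup H] [InnerProductSpace ℂ H] [CompleteSpace H]
    (φ : G → H →L[ℂ] H) (hα : IsInvolution G α) (hφ : IsAlphaCP α φ)
    (D D' : KreinDilation G α H φ) :
    ∃ U : D.K ≃ₗᵢ[ℂ] D'.K,
      (∀ x : D.K, U (D.J x) = D'.J (U x)) ∧
      (∀ ξ : H, U (D.V ξ) = D'.V ξ) ∧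
      (∀ (g : G) (x : D.K), U (D.rep g x) = D'.rep g (U x)) := by
  obtain ⟨T, hTg, hTn⟩ := KD_exists_clm D D'
  obtain ⟨T', hT'g, hT'n⟩ := KD_exists_clm D' D
  have hdense := KD_dense D
  have hdense' := KD_dense D'
  have hTT' : T' ∘L T = ContinuousLinearMap.id ℂ D.K := by
    refine ContinuousLinearMap.ext_on hdense ?_
    rintro x ⟨g, ξ, rfl⟩
    simp [ContinuousLinearMap.comp_apply, hTg g ξ, hT'g g ξ]
  have hT'T : T ∘L T' = ContinuousLinearMap.id ℂ D'.K := by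
    refine ContinuousLinearMap.ext_on hdense' ?_
    rintro x ⟨g, ξ, rfl⟩
    simp [ContinuousLinearMap.comp_apply, hT'g g ξ, hTg g ξ]
  have hleft : ∀ x : D.K, T' (T x) = x := by
    intro x
    have := ContinuousLinearMap.ext_iff.mp hTT' x
    simpa using this
  have hright : ∀ x : D'.K, T (T' x) = x := by
    intro x
    have := ContinuousLinearMap.ext_iff.mp hT'T x
    simpa using this
  refine ⟨{ toFun := T, invFun := T', map_add' := T.map_add, map_smul' := T.map_smul,
            left_inv := hleft, right_inv := hright, norm_map' := hTn }, ?_, ?_, ?_⟩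
  · -- J
    have hJ : T ∘L D.J = D'.J ∘L T := by
      refine ContinuousLinearMap.ext_on hdense ?_
      rintro x ⟨g, ξ, rfl⟩
      simp only [ContinuousLinearMap.comp_apply]
      rw [KD_commJ_apply, hTg, hTg, KD_commJ_apply]
    intro x
    have := ContinuousLinearMap.ext_iff.mp hJ x
    simpa using this
  · -- V
    intro ξ
    have h1 : D.rep 1 (D.V ξ) = D.V ξ := KD_rep_one_apply D _
    have h2 : D'.rep 1 (D'.V ξ) = D'.V ξ := KD_rep_one_apply D' _
    have := hTg 1 ξ
    rw [h1, h2] at this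
    exact this
  · -- rep
    intro g
    have hrep : T ∘L D.rep g = D'.rep g ∘L T := by
      refine ContinuousLinearMap.ext_on hdense ?_
      rintro x ⟨h, ξ, rfl⟩
      simp only [ContinuousLinearMap.comp_apply]
      rw [KD_rep_mul_apply, hTg, hTg, KD_rep_mul_apply]
    intro x
    have := ContinuousLinearMap.ext_iff.mp hrep x
    simpa using this
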